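/- Let Z be a standard Gaussian random variable and ξ a centered Gaussian with variance v > 0, independent of Z. Define g(c) = E[−σ(Z)·c(Z+ξ) + log(1 + e^{c(Z+ξ)})] for c ∈ ℝ. Then g is strictly convex on ℝ, with g'(0) < 0 and g'(1) > 0, and hence g has a unique minimizer c* satisfying 0 < c* < 1. -/

import Mathlib

open MeasureTheory ProbabilityTheory
open scoped Real
open scoped NNReal ENNReal

/-- The sigmoid (logistic) function `σ(z) = 1 / (1 + e^{-z})`. -/
noncomputable def sigmoid (z : ℝ) : ℝ := 1 / (1 + Real.exp (-z))

lemma sigmoid_eq (t : ℝ) : sigmoid t = Real.exp t / (1 + Real.exp t) := by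
  unfold sigmoid
  rw [Real.exp_neg]
  have h : Real.exp t ≠ 0 := (Real.exp_pos t).ne'
  have h2 : (0:ℝ) < 1 + Real.exp t := by positivity
  have h3 : (0:ℝ) < 1 + (Real.exp t)⁻¹ := by positivity
  field_simp
  ring

lemma sigmoid_nonneg (t : ℝ) : 0 ≤ sigmoid t := by
  unfold sigmoid; positivity

lemma sigmoid_le_one (t : ℝ) : sigmoid t ≤ 1 := by
  unfold sigmoid
  rw [div_le_one (by positivity)]
  nlinarith [Real.exp_pos (-t)]

lemma sigmoid_strictMono : StrictMono sigmoid := by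
  intro a b hab
  unfold sigmoid
  apply div_lt_div_of_pos_left one_pos (by positivity)
  have := Real.exp_lt_exp.2 (neg_lt_neg hab)
  linarith

lemma sigmoid_zero : sigmoid 0 = 1/2 := by
  unfold sigmoid; norm_num

lemma sigmoid_neg (t : ℝ) : sigmoid (-t) = 1 - sigmoid t := by
  rw [sigmoid_eq, sigmoid_eq, Real.exp_neg]
  have h : Real.exp t ≠ 0 := (Real.exp_pos t).ne'
  have h2 : (0:ℝ) < 1 + Real.exp t := by positivity
  have h3 : (0:ℝ) < 1 + (Real.exp t)⁻¹ := by positivity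
  field_simp
  ring

lemma continuous_sigmoid_loc : Continuous sigmoid := by
  unfold sigmoid
  apply Continuous.div continuous_const
  · exact continuous_const.add (Real.continuous_exp.comp continuous_neg)
  · intro x; positivity

/-- The scalar objective `g(c) = E[−σ(Z)·c(Z+ξ) + log(1+e^{c(Z+ξ)})]`. -/
noncomputable def scaleLoss {Ω : Type*} [MeasurableSpace Ω] (P : Measure Ω)
    (Z ξ : Ω → ℝ) (c : ℝ) : ℝ :=
  ∫ ω, (-(sigmoid (Z ω)) * (c * (Z ω + ξ ω))
    + Real.log (1 + Real.exp (c * (Z ω + ξ ω)))) ∂P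


/-- pointwise loss -/
noncomputable def pl (z w c : ℝ) : ℝ :=
  -(sigmoid z) * (c * w) + Real.log (1 + Real.exp (c * w))

noncomputable def pl' (z w c : ℝ) : ℝ := (sigmoid (c * w) - sigmoid z) * w

lemma hasDerivAt_pl (z w c : ℝ) : HasDerivAt (fun c => pl z w c) (pl' z w c) c := by
  have h1 : HasDerivAt (fun c : ℝ => c * w) w c := by
    simpa using hasDerivAt_mul_const (x := c) w
  have h2 : HasDerivAt (fun c : ℝ => Real.exp (c * w)) (Real.exp (c * w) * w) c :=
    (Real.hasDerivAt_exp _).comp c h1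
  have h3 : HasDerivAt (fun c : ℝ => 1 + Real.exp (c * w)) (Real.exp (c * w) * w) c :=
    h2.const_add 1
  have hpos : (0:ℝ) < 1 + Real.exp (c * w) := by positivity
  have h4 : HasDerivAt (fun c : ℝ => Real.log (1 + Real.exp (c * w)))
      ((Real.exp (c * w) * w) / (1 + Real.exp (c * w))) c := h3.log hpos.ne'
  have h5 : HasDerivAt (fun c : ℝ => -(sigmoid z) * (c * w)) (-(sigmoid z) * w) c :=
    h1.const_mul _
  have h6 : HasDerivAt (fun c : ℝ => -(sigmoid z) * (c * w) + Real.log (1 + Real.exp (c * w))) _ c :=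
    h5.add h4
  refine h6.congr_deriv ?_
  rw [pl', sigmoid_eq (c * w)]
  field_simp
  ring

lemma continuous_pl (z w : ℝ) : Continuous (fun c => pl z w c) :=
  continuous_iff_continuousAt.2 fun c => (hasDerivAt_pl z w c).differentiableAt.continuousAt

lemma pl'_strictMono (z : ℝ) {w : ℝ} (hw : w ≠ 0) : StrictMono (fun c => pl' z w c) := by
  intro a b hab
  simp only [pl']
  rcases hw.lt_or_gt with hneg | hpos
  · have h1 : b * w < a * w := mul_lt_mul_of_neg_right hab hneg
    have h2 : sigmoid (b * w) < sigmoid (a * w) := sigmoid_strictMono h1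
    nlinarith
  · have h1 : a * w < b * w := mul_lt_mul_of_pos_right hab hpos
    have h2 : sigmoid (a * w) < sigmoid (b * w) := sigmoid_strictMono h1
    nlinarith

lemma pl_strictConvexOn (z : ℝ) {w : ℝ} (hw : w ≠ 0) :
    StrictConvexOn ℝ Set.univ (fun c => pl z w c) := by
  have hc : Continuous (fun c => pl z w c) :=
    continuous_iff_continuousAt.2 fun c => (hasDerivAt_pl z w c).differentiableAt.continuousAt
  have hd : deriv (fun c => pl z w c) = fun c => pl' z w c :=
    funext fun c => (hasDerivAt_pl z w c).deriv
  exact StrictMono.strictConvexOn_univ_of_deriv hc (hd ▸ pl'_strictMono z hw)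

lemma pl_zero_w (z c : ℝ) : pl z 0 c = Real.log 2 := by
  simp [pl]; norm_num

lemma abs_pl_le (z w c : ℝ) : |pl z w c| ≤ 2 * (|c| * |w|) + Real.log 2 := by
  have hA : |(-(sigmoid z)) * (c * w)| ≤ |c| * |w| := by
    rw [abs_mul, abs_neg, abs_mul]
    have h1 : |sigmoid z| ≤ 1 := abs_le.2 ⟨by linarith [sigmoid_nonneg z], sigmoid_le_one z⟩
    have h2 : (0:ℝ) ≤ |c| * |w| := by positivity
    nlinarith [abs_nonneg (sigmoid z)]
  have hBpos : (0:ℝ) ≤ Real.log (1 + Real.exp (c * w)) := by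
    apply Real.log_nonneg
    linarith [Real.exp_pos (c * w)]
  have hBle : Real.log (1 + Real.exp (c * w)) ≤ Real.log 2 + |c * w| := by
    have h1 : Real.exp (c * w) ≤ Real.exp |c * w| := Real.exp_le_exp.2 (le_abs_self _)
    have h2 : (1:ℝ) ≤ Real.exp |c * w| := by
      rw [← Real.exp_zero]; exact Real.exp_le_exp.2 (abs_nonneg _)
    have h3 : 1 + Real.exp (c * w) ≤ 2 * Real.exp |c * w| := by linarith
    calc Real.log (1 + Real.exp (c * w)) ≤ Real.log (2 * Real.exp |c * w|) :=
          Real.log_le_log (by positivity) h3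
      _ = Real.log 2 + |c * w| := by rw [Real.log_mul (by norm_num) (Real.exp_pos _).ne',
          Real.log_exp]
  rw [pl]
  have := abs_add_le ((-(sigmoid z)) * (c * w)) (Real.log (1 + Real.exp (c * w)))
  have hB : |Real.log (1 + Real.exp (c * w))| ≤ Real.log 2 + |c| * |w| := by
    rw [abs_of_nonneg hBpos, ← abs_mul]; exact hBle
  calc |(-(sigmoid z)) * (c * w) + Real.log (1 + Real.exp (c * w))|
      ≤ |(-(sigmoid z)) * (c * w)| + |Real.log (1 + Real.exp (c * w))| := abs_add_le _ _
    _ ≤ |c| * |w| + (Real.log 2 + |c| * |w|) := add_le_add hA hB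
    _ = 2 * (|c| * |w|) + Real.log 2 := by ring

lemma abs_pl'_le (z w c : ℝ) : |pl' z w c| ≤ |w| := by
  rw [pl', abs_mul]
  have h : |sigmoid (c * w) - sigmoid z| ≤ 1 := by
    rw [abs_sub_le_iff]
    constructor <;> linarith [sigmoid_nonneg (c*w), sigmoid_le_one (c*w),
      sigmoid_nonneg z, sigmoid_le_one z]
  nlinarith [abs_nonneg w]

lemma integrable_id_gauss {v : ℝ≥0} (hv : v ≠ 0) :
    Integrable (fun x : ℝ => x) (gaussianReal 0 v) := by
  rw [gaussianReal_of_var_ne_zero _ hv]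
  rw [integrable_withDensity_iff (measurable_gaussianPDF _ _)
    (ae_of_all _ fun x => ENNReal.ofReal_lt_top)]
  have hvpos : (0:ℝ) < (v:ℝ) := by positivity
  have hb : (0:ℝ) < 1/(2*(v:ℝ)) := by positivity
  have h := ((integrable_mul_exp_neg_mul_sq hb).const_mul ((√(2 * π * v))⁻¹))
  apply h.congr
  apply Filter.Eventually.of_forall
  intro x
  show _ = x * (ENNReal.ofReal (gaussianPDFReal 0 v x)).toReal
  rw [ENNReal.toReal_ofReal (gaussianPDFReal_nonneg _ _ _), gaussianPDFReal]
  rw [show -(x - 0)^2/(2*(v:ℝ)) = -(1/(2*(v:ℝ)))*x^2 by field_simp; ring]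
  ring

lemma integral_id_gauss (v : ℝ≥0) : ∫ x, x ∂(gaussianReal 0 v) = 0 := by
  by_cases hv : v = 0
  · simp [hv, integral_dirac]
  have hmap : Measure.map (fun x : ℝ => (-1:ℝ) * x) (gaussianReal 0 v) = gaussianReal 0 v := by
    have h := gaussianReal_map_const_mul (μ := 0) (v := v) (-1)
    have h2 : (⟨(-1:ℝ)^2, sq_nonneg _⟩ : ℝ≥0) = 1 := by ext; norm_num
    rw [h]
    congr 1
    · ring
    · ext; simp
  have hint : ∫ x, x ∂(Measure.map (fun x : ℝ => (-1:ℝ) * x) (gaussianReal 0 v))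
      = ∫ x, (-1:ℝ) * x ∂(gaussianReal 0 v) := by
    rw [integral_map (measurable_const_mul (-1)).aemeasurable]
    exact aestronglyMeasurable_id
  rw [hmap] at hint
  have : ∫ x, (-1:ℝ) * x ∂(gaussianReal 0 v) = - ∫ x, x ∂(gaussianReal 0 v) := by
    simp only [neg_one_mul]
    exact integral_neg _
  linarith [hint, this, le_refl (∫ x, x ∂(gaussianReal 0 v))]

lemma gaussPDF_prod_key {v : ℝ≥0} (hv : v ≠ 0) (z w : ℝ) :
    gaussianPDFReal 0 1 z * gaussianPDFReal z v w =
      gaussianPDFReal 0 (1 + v) w * gaussianPDFReal (w / (1 + (v:ℝ))) (v / (1 + v)) z := by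
  have hvpos : (0:ℝ) < (v:ℝ) := by
    have := hv; positivity
  have h1v : (0:ℝ) < 1 + (v:ℝ) := by linarith
  simp only [gaussianPDFReal]
  have hc1 : ((1 + v : ℝ≥0) : ℝ) = 1 + (v:ℝ) := by push_cast; ring
  have hc2 : ((v / (1 + v) : ℝ≥0) : ℝ) = (v:ℝ) / (1 + (v:ℝ)) := by push_cast; ring
  rw [hc1, hc2]
  have hconst : (√(2 * π * 1))⁻¹ * (√(2 * π * v))⁻¹
      = (√(2 * π * (1 + (v:ℝ))))⁻¹ * (√(2 * π * ((v:ℝ) / (1 + (v:ℝ)))))⁻¹ := by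
    rw [← mul_inv, ← mul_inv, ← Real.sqrt_mul (by positivity), ← Real.sqrt_mul (by positivity)]
    congr 2
    field_simp
  have hexp : rexp (-(z - 0)^2 / (2 * 1)) * rexp (-(w - z)^2 / (2 * (v:ℝ)))
      = rexp (-(w - 0)^2 / (2 * (1 + (v:ℝ)))) *
        rexp (-(z - w / (1 + (v:ℝ)))^2 / (2 * ((v:ℝ) / (1 + (v:ℝ))))) := by
    rw [← Real.exp_add, ← Real.exp_add]
    congr 1
    field_simp
    ring
  calc (√(2 * π * 1))⁻¹ * rexp (-(z - 0)^2 / (2 * 1)) *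
        ((√(2 * π * v))⁻¹ * rexp (-(w - z)^2 / (2 * (v:ℝ))))
      = ((√(2 * π * 1))⁻¹ * (√(2 * π * v))⁻¹) *
        (rexp (-(z - 0)^2 / (2 * 1)) * rexp (-(w - z)^2 / (2 * (v:ℝ)))) := by ring
    _ = ((√(2 * π * (1 + (v:ℝ))))⁻¹ * (√(2 * π * ((v:ℝ) / (1 + (v:ℝ)))))⁻¹) *
        (rexp (-(w - 0)^2 / (2 * (1 + (v:ℝ)))) *
          rexp (-(z - w / (1 + (v:ℝ)))^2 / (2 * ((v:ℝ) / (1 + (v:ℝ)))))) := by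
        rw [hconst, hexp]
    _ = _ := by ring

lemma conv_gauss {v : ℝ≥0} (hv : v ≠ 0) :
    Measure.map (fun p : ℝ × ℝ => p.1 + p.2) ((gaussianReal 0 1).prod (gaussianReal 0 v))
      = gaussianReal 0 (1 + v) := by
  have h1vpos : (0:ℝ≥0) < 1 + v := by positivity
  have h1v : (1 + v : ℝ≥0) ≠ 0 := h1vpos.ne'
  have hvpos : (0:ℝ≥0) < v := pos_iff_ne_zero.2 hv
  have hv' : (v / (1 + v) : ℝ≥0) ≠ 0 := (div_pos hvpos h1vpos).ne'
  have hmadd : Measurable (fun p : ℝ × ℝ => p.1 + p.2) := measurable_fst.add measurable_snd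
  have hm2 : Measurable (Function.uncurry fun z w => gaussianPDF z v w) := by
    unfold gaussianPDF gaussianPDFReal Function.uncurry
    apply Measurable.ennreal_ofReal
    fun_prop
  ext s hs
  rw [Measure.map_apply hmadd hs, Measure.prod_apply (hs.preimage hmadd)]
  have hstep : ∀ z : ℝ, (gaussianReal 0 v) (Prod.mk z ⁻¹' ((fun p : ℝ × ℝ => p.1 + p.2) ⁻¹' s))
      = ∫⁻ w in s, gaussianPDF z v w := by
    intro z
    have hpre : Prod.mk z ⁻¹' ((fun p : ℝ × ℝ => p.1 + p.2) ⁻¹' s)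
        = (fun x => z + x) ⁻¹' s := rfl
    rw [hpre,
      show (gaussianReal 0 v) ((fun x => z + x) ⁻¹' s)
        = (Measure.map (fun x => z + x) (gaussianReal 0 v)) s from
          (Measure.map_apply (measurable_const_add z) hs).symm]
    rw [show (fun x => z + x) = (z + ·) from rfl, gaussianReal_map_const_add, zero_add,
      gaussianReal_apply _ hv]
  simp_rw [hstep]
  have hmint : Measurable fun z => ∫⁻ w in s, gaussianPDF z v w :=
    hm2.lintegral_prod_right'
  rw [gaussianReal_of_var_ne_zero 0 one_ne_zero,
    lintegral_withDensity_eq_lintegral_mul _ (measurable_gaussianPDF _ _) hmint]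
  simp only [Pi.mul_apply]
  have hpull : ∀ z : ℝ, gaussianPDF 0 1 z * ∫⁻ w in s, gaussianPDF z v w
      = ∫⁻ w in s, gaussianPDF 0 1 z * gaussianPDF z v w := by
    intro z
    rw [lintegral_const_mul _ (measurable_gaussianPDF z v)]
  simp_rw [hpull]
  rw [lintegral_lintegral_swap (by
    show AEMeasurable ((fun p : ℝ × ℝ => gaussianPDF 0 1 p.1) *
      (Function.uncurry fun z w => gaussianPDF z v w)) _
    apply AEMeasurable.mul
    · exact ((measurable_gaussianPDF 0 1).comp measurable_fst).aemeasurable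
    · exact (hm2.comp measurable_id).aemeasurable)]
  have hinner : ∀ w : ℝ, ∫⁻ z, gaussianPDF 0 1 z * gaussianPDF z v w ∂volume
      = gaussianPDF 0 (1 + v) w := by
    intro w
    have h1 : ∀ z : ℝ, gaussianPDF 0 1 z * gaussianPDF z v w
        = gaussianPDF 0 (1 + v) w
          * gaussianPDF (w / (1 + (v:ℝ))) (v / (1 + v)) z := by
      intro z
      simp only [gaussianPDF_def]
      rw [← ENNReal.ofReal_mul (gaussianPDFReal_nonneg _ _ _),
        gaussPDF_prod_key hv z w,
        ENNReal.ofReal_mul (gaussianPDFReal_nonneg _ _ _)]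
    simp_rw [h1]
    rw [lintegral_const_mul _ (measurable_gaussianPDF _ _),
      lintegral_gaussianPDF_eq_one _ hv', mul_one]
  simp_rw [hinner]
  exact (gaussianReal_apply _ h1v s).symm


section Prod
variable {α β : Type*} [MeasurableSpace α] [MeasurableSpace β]
  {μ : Measure α} {ν : Measure β} [IsProbabilityMeasure μ] [IsProbabilityMeasure ν]

lemma integrable_comp_fst {f : α → ℝ} (hf : Integrable f μ) :
    Integrable (fun p : α × β => f p.1) (μ.prod ν) := by
  have hmap : Measure.map Prod.fst (μ.prod ν) = μ := by
    rw [Measure.map_fst_prod]; simp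
  have h : Integrable f (Measure.map Prod.fst (μ.prod ν)) := by rwa [hmap]
  exact (integrable_map_measure (by rw [hmap]; exact hf.aestronglyMeasurable)
    measurable_fst.aemeasurable).mp h

lemma integrable_comp_snd {f : β → ℝ} (hf : Integrable f ν) :
    Integrable (fun p : α × β => f p.2) (μ.prod ν) := by
  have hmap : Measure.map Prod.snd (μ.prod ν) = ν := by
    rw [Measure.map_snd_prod]; simp
  have h : Integrable f (Measure.map Prod.snd (μ.prod ν)) := by rwa [hmap]
  exact (integrable_map_measure (by rw [hmap]; exact hf.aestronglyMeasurable)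
    measurable_snd.aemeasurable).mp h

end Prod

section Main
variable {v : ℝ≥0}

/-- abbreviation for the product measure -/
noncomputable def gp (v : ℝ≥0) : Measure (ℝ × ℝ) :=
  (gaussianReal 0 1).prod (gaussianReal 0 v)

instance (v : ℝ≥0) : IsProbabilityMeasure (gp v) := by
  unfold gp; infer_instance

lemma integrable_linABS (hv : v ≠ 0) :
    Integrable (fun p : ℝ × ℝ => |p.1| + |p.2|) (gp v) :=
  ((integrable_comp_fst (integrable_id_gauss one_ne_zero).abs).add
    (integrable_comp_snd (integrable_id_gauss hv).abs))

lemma ae_sum_ne_zero (hv : v ≠ 0) : ∀ᵐ p ∂(gp v), p.1 + p.2 ≠ 0 := by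
  rw [ae_iff]
  have hms : MeasurableSet {p : ℝ × ℝ | p.1 + p.2 = 0} :=
    (measurable_fst.add measurable_snd) (measurableSet_singleton 0)
  have : {p : ℝ × ℝ | ¬ p.1 + p.2 ≠ 0} = {p : ℝ × ℝ | p.1 + p.2 = 0} := by
    ext p; simp
  rw [this]
  unfold gp
  rw [Measure.prod_apply hms]
  have hslice : ∀ z : ℝ, (Prod.mk z ⁻¹' {p : ℝ × ℝ | p.1 + p.2 = 0}) = {-z} := by
    intro z; ext x
    simp only [Set.mem_preimage, Set.mem_setOf_eq, Set.mem_singleton_iff]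
    constructor <;> intro h <;> linarith
  simp_rw [hslice]
  have hz : ∀ z : ℝ, (gaussianReal 0 v) {-z} = 0 := fun z =>
    gaussianReal_absolutelyContinuous 0 hv (Real.volume_singleton)
  simp_rw [hz, lintegral_zero]

lemma continuous_pl2 (c : ℝ) : Continuous (fun p : ℝ × ℝ => pl p.1 (p.1 + p.2) c) := by
  unfold pl
  apply Continuous.add
  · exact ((continuous_sigmoid_loc.comp continuous_fst).neg).mul
      (continuous_const.mul (continuous_fst.add continuous_snd))
  · have hcont : Continuous fun p : ℝ × ℝ => 1 + Real.exp (c * (p.1 + p.2)) :=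
      continuous_const.add (Real.continuous_exp.comp
        (continuous_const.mul (continuous_fst.add continuous_snd)))
    apply hcont.log
    intro p
    positivity

lemma continuous_pl2' (c : ℝ) : Continuous (fun p : ℝ × ℝ => pl' p.1 (p.1 + p.2) c) := by
  unfold pl'
  exact ((continuous_sigmoid_loc.comp (continuous_const.mul
    (continuous_fst.add continuous_snd))).sub
      (continuous_sigmoid_loc.comp continuous_fst)).mul (continuous_fst.add continuous_snd)

lemma integrable_pl (hv : v ≠ 0) (c : ℝ) :
    Integrable (fun p : ℝ × ℝ => pl p.1 (p.1 + p.2) c) (gp v) := by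
  apply Integrable.mono' (((integrable_linABS hv).const_mul (2 * |c|)).add
    (integrable_const (Real.log 2))) ((continuous_pl2 c).aestronglyMeasurable)
  apply Filter.Eventually.of_forall
  intro p
  calc ‖pl p.1 (p.1 + p.2) c‖ ≤ 2 * (|c| * |p.1 + p.2|) + Real.log 2 := abs_pl_le _ _ _
    _ ≤ 2 * |c| * (|p.1| + |p.2|) + Real.log 2 := by
        have h1 : |p.1 + p.2| ≤ |p.1| + |p.2| := abs_add_le _ _
        have h2 : (0:ℝ) ≤ |c| := abs_nonneg c
        nlinarith

lemma integrable_pl' (hv : v ≠ 0) (c : ℝ) :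
    Integrable (fun p : ℝ × ℝ => pl' p.1 (p.1 + p.2) c) (gp v) := by
  apply Integrable.mono' (integrable_linABS hv) ((continuous_pl2' c).aestronglyMeasurable)
  apply Filter.Eventually.of_forall
  intro p
  calc ‖pl' p.1 (p.1 + p.2) c‖ ≤ |p.1 + p.2| := abs_pl'_le _ _ _
    _ ≤ |p.1| + |p.2| := abs_add_le _ _

lemma hasDerivAt_G (hv : v ≠ 0) (c : ℝ) :
    HasDerivAt (fun c => ∫ p, pl p.1 (p.1 + p.2) c ∂(gp v))
      (∫ p, pl' p.1 (p.1 + p.2) c ∂(gp v)) c := by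
  have h := hasDerivAt_integral_of_dominated_loc_of_deriv_le
    (F := fun c (p : ℝ × ℝ) => pl p.1 (p.1 + p.2) c)
    (F' := fun c (p : ℝ × ℝ) => pl' p.1 (p.1 + p.2) c)
    (x₀ := c) (μ := gp v) (bound := fun p => |p.1| + |p.2|)
    (Filter.univ_mem)
    (Filter.Eventually.of_forall fun x => (continuous_pl2 x).aestronglyMeasurable)
    (integrable_pl hv c)
    ((continuous_pl2' c).aestronglyMeasurable)
    (Filter.Eventually.of_forall fun p x _ =>
      (abs_pl'_le p.1 (p.1 + p.2) x).trans (abs_add_le _ _))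
    (integrable_linABS hv)
    (Filter.Eventually.of_forall fun p x _ => hasDerivAt_pl p.1 (p.1 + p.2) x)
  exact h.2

lemma half_lt_sigmoid {z : ℝ} (hz : 0 < z) : 1/2 < sigmoid z := by
  have := sigmoid_strictMono hz
  rwa [sigmoid_zero] at this

lemma sigmoid_lt_half {z : ℝ} (hz : z < 0) : sigmoid z < 1/2 := by
  have := sigmoid_strictMono hz
  rwa [sigmoid_zero] at this

lemma q_nonneg (z : ℝ) : 0 ≤ (sigmoid z - 1/2) * z := by
  rcases lt_trichotomy z 0 with h | h | h
  · nlinarith [sigmoid_lt_half h]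
  · simp [h]
  · nlinarith [half_lt_sigmoid h]

lemma q_pos {z : ℝ} (hz : z ≠ 0) : 0 < (sigmoid z - 1/2) * z := by
  rcases hz.lt_or_gt with h | h
  · nlinarith [sigmoid_lt_half h]
  · nlinarith [half_lt_sigmoid h]

lemma q_scale {s : ℝ} (hs : 1 < s) (z : ℝ) :
    (sigmoid z - 1/2) * z ≤ (sigmoid (s*z) - 1/2) * (s*z) := by
  rcases lt_trichotomy z 0 with h | h | h
  · have h1 : s * z < z := by nlinarith
    have h2 : sigmoid (s*z) < sigmoid z := sigmoid_strictMono h1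
    have h3 : sigmoid z < 1/2 := sigmoid_lt_half h
    nlinarith
  · simp [h]
  · have h1 : z < s * z := by nlinarith
    have h2 : sigmoid z < sigmoid (s*z) := sigmoid_strictMono h1
    have h3 : 1/2 < sigmoid z := half_lt_sigmoid h
    nlinarith

lemma q_scale_strict {s : ℝ} (hs : 1 < s) {z : ℝ} (hz : z ≠ 0) :
    (sigmoid z - 1/2) * z < (sigmoid (s*z) - 1/2) * (s*z) := by
  rcases hz.lt_or_gt with h | h
  · have h1 : s * z < z := by nlinarith
    have h2 : sigmoid (s*z) < sigmoid z := sigmoid_strictMono h1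
    have h3 : sigmoid z < 1/2 := sigmoid_lt_half h
    nlinarith
  · have h1 : z < s * z := by nlinarith
    have h2 : sigmoid z < sigmoid (s*z) := sigmoid_strictMono h1
    have h3 : 1/2 < sigmoid z := half_lt_sigmoid h
    nlinarith

lemma N1_ne_zero : (gaussianReal 0 1) ({(0:ℝ)}ᶜ) = 1 := by
  rw [measure_compl (measurableSet_singleton 0) (measure_ne_top _ _),
    gaussianReal_absolutelyContinuous 0 one_ne_zero Real.volume_singleton]
  simp

/-- Fubini helper : `∫ h(z)·(z+x) dμprod = ∫ h(z)·z dN(0,1)` for bounded continuous `h`. -/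
lemma fub (hv : v ≠ 0) {h : ℝ → ℝ} (hc : Continuous h) (hb : ∀ z, |h z| ≤ 1) :
    ∫ p, h p.1 * (p.1 + p.2) ∂(gp v) = ∫ z, h z * z ∂(gaussianReal 0 1) := by
  have hint : Integrable (fun p : ℝ × ℝ => h p.1 * (p.1 + p.2)) (gp v) := by
    apply Integrable.mono' (integrable_linABS hv)
      ((hc.comp continuous_fst).mul (continuous_fst.add continuous_snd)).aestronglyMeasurable
    apply Filter.Eventually.of_forall
    intro p
    calc ‖h p.1 * (p.1 + p.2)‖ = |h p.1| * |p.1 + p.2| := abs_mul _ _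
      _ ≤ 1 * |p.1 + p.2| := by
          have := abs_nonneg (p.1 + p.2); nlinarith [hb p.1]
      _ ≤ |p.1| + |p.2| := by rw [one_mul]; exact abs_add_le _ _
  rw [gp] at hint ⊢
  rw [integral_prod _ hint]
  have hinner : ∀ z : ℝ, ∫ x, h z * (z + x) ∂(gaussianReal 0 v) = h z * z := by
    intro z
    rw [integral_const_mul, integral_add (integrable_const z) (integrable_id_gauss hv),
      integral_const, integral_id_gauss]
    simp
  simp_rw [hinner]

lemma deriv0_neg (hv : v ≠ 0) : ∫ p, pl' p.1 (p.1 + p.2) 0 ∂(gp v) < 0 := by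
  have hrw : (fun p : ℝ × ℝ => pl' p.1 (p.1 + p.2) 0)
      = fun p => (1/2 - sigmoid p.1) * (p.1 + p.2) := by
    funext p
    rw [pl', zero_mul, sigmoid_zero]
  rw [hrw, fub (h := fun z => 1/2 - sigmoid z) hv (continuous_const.sub continuous_sigmoid_loc) (fun z => by
    rw [abs_sub_le_iff]
    constructor <;> linarith [sigmoid_nonneg z, sigmoid_le_one z])]
  have hkey : 0 < ∫ z, (sigmoid z - 1/2) * z ∂(gaussianReal 0 1) := by
    have hqint : Integrable (fun z => (sigmoid z - 1/2) * z) (gaussianReal 0 1) := by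
      apply Integrable.mono' (integrable_id_gauss one_ne_zero).abs
        (((continuous_sigmoid_loc.sub continuous_const).mul continuous_id).aestronglyMeasurable)
      apply Filter.Eventually.of_forall
      intro z
      show ‖(sigmoid z - 1/2) * z‖ ≤ |id z|
      rw [Real.norm_eq_abs, abs_mul]
      have h1 : |sigmoid z - 1/2| ≤ 1 := by
        rw [abs_sub_le_iff]
        constructor <;> linarith [sigmoid_nonneg z, sigmoid_le_one z]
      have h2 : |id z| = |z| := rfl
      rw [h2]
      nlinarith [abs_nonneg z]
    rw [integral_pos_iff_support_of_nonneg_ae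
      (Filter.Eventually.of_forall fun z => q_nonneg z) hqint]
    have hsub : ({(0:ℝ)}ᶜ : Set ℝ) ⊆ Function.support fun z => (sigmoid z - 1/2) * z := by
      intro z hz
      exact (q_pos hz).ne'
    calc (0:ℝ≥0∞) < 1 := by norm_num
      _ = (gaussianReal 0 1) {(0:ℝ)}ᶜ := N1_ne_zero.symm
      _ ≤ (gaussianReal 0 1) (Function.support fun z => (sigmoid z - 1/2) * z) :=
          measure_mono hsub
  have : ∫ z, (1/2 - sigmoid z) * z ∂(gaussianReal 0 1)
      = - ∫ z, (sigmoid z - 1/2) * z ∂(gaussianReal 0 1) := by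
    rw [← integral_neg]
    congr 1
    funext z
    ring
  rw [this]
  linarith

lemma integrable_q_gen {s : ℝ} (hs : 0 < s) :
    Integrable (fun z => (sigmoid (s*z) - 1/2) * (s*z)) (gaussianReal 0 1) := by
  apply Integrable.mono' ((integrable_id_gauss one_ne_zero).abs.const_mul s)
    (((continuous_sigmoid_loc.comp (continuous_const.mul continuous_id)).sub
      continuous_const).mul (continuous_const.mul continuous_id)).aestronglyMeasurable
  apply Filter.Eventually.of_forall
  intro z
  show ‖(sigmoid (s*z) - 1/2) * (s*z)‖ ≤ s * |z|
  rw [Real.norm_eq_abs, abs_mul]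
  have h1 : |sigmoid (s*z) - 1/2| ≤ 1 := by
    rw [abs_sub_le_iff]
    constructor <;> linarith [sigmoid_nonneg (s*z), sigmoid_le_one (s*z)]
  have h2 : |s*z| = s * |z| := by rw [abs_mul, abs_of_pos hs]
  rw [h2]
  nlinarith [abs_nonneg z, mul_nonneg hs.le (abs_nonneg z)]

lemma deriv1_pos (hv : v ≠ 0) : 0 < ∫ p, pl' p.1 (p.1 + p.2) 1 ∂(gp v) := by
  have hvpos : (0:ℝ) < (v:ℝ) := by positivity
  set s : ℝ := Real.sqrt (1 + (v:ℝ)) with hs_def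
  have h1vpos : (0:ℝ) < 1 + (v:ℝ) := by linarith
  have hs2 : s^2 = 1 + (v:ℝ) := Real.sq_sqrt h1vpos.le
  have hs1 : 1 < s := by
    nlinarith [hs2, Real.sqrt_nonneg (1 + (v:ℝ)), hs_def]
  have hspos : 0 < s := by linarith
  have hmadd : Measurable (fun p : ℝ × ℝ => p.1 + p.2) := measurable_fst.add measurable_snd
  have hmap2 : Measure.map (fun z : ℝ => s * z) (gaussianReal 0 1) = gaussianReal 0 (1 + v) := by
    have h := gaussianReal_map_const_mul (μ := 0) (v := 1) s
    rw [h]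
    congr 1
    · exact mul_zero s
    · rw [mul_one]
      apply NNReal.coe_injective
      simp only [NNReal.coe_mk]
      push_cast
      linarith [hs2]
  have hcf1 : Continuous (fun w : ℝ => sigmoid w * w) := continuous_sigmoid_loc.mul continuous_id
  have habs_f1 : ∀ w : ℝ, |sigmoid w * w| ≤ |w| := by
    intro w
    rw [abs_mul]
    have h1 : |sigmoid w| ≤ 1 := abs_le.2 ⟨by linarith [sigmoid_nonneg w], sigmoid_le_one w⟩
    nlinarith [abs_nonneg w]
  have int1 : Integrable (fun p : ℝ × ℝ => sigmoid (p.1+p.2) * (p.1+p.2)) (gp v) := by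
    apply Integrable.mono' (integrable_linABS hv)
      (hcf1.comp (continuous_fst.add continuous_snd)).aestronglyMeasurable
    exact Filter.Eventually.of_forall fun p =>
      (habs_f1 (p.1+p.2)).trans (abs_add_le _ _)
  have int2 : Integrable (fun p : ℝ × ℝ => sigmoid p.1 * (p.1+p.2)) (gp v) := by
    apply Integrable.mono' (integrable_linABS hv)
      ((continuous_sigmoid_loc.comp continuous_fst).mul
        (continuous_fst.add continuous_snd)).aestronglyMeasurable
    apply Filter.Eventually.of_forall
    intro p
    show ‖sigmoid p.1 * (p.1 + p.2)‖ ≤ |p.1| + |p.2|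
    rw [Real.norm_eq_abs, abs_mul]
    have h1 : |sigmoid p.1| ≤ 1 := abs_le.2 ⟨by linarith [sigmoid_nonneg p.1],
      sigmoid_le_one p.1⟩
    calc |sigmoid p.1| * |p.1 + p.2| ≤ 1 * |p.1 + p.2| := by
          nlinarith [abs_nonneg (p.1 + p.2)]
      _ ≤ |p.1| + |p.2| := by rw [one_mul]; exact abs_add_le _ _
  have hrw : (fun p : ℝ × ℝ => pl' p.1 (p.1 + p.2) 1)
      = fun p => sigmoid (p.1+p.2) * (p.1+p.2) - sigmoid p.1 * (p.1+p.2) := by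
    funext p
    rw [pl', one_mul]
    ring
  rw [hrw, integral_sub int1 int2,
    fub hv continuous_sigmoid_loc (fun z => abs_le.2 ⟨by linarith [sigmoid_nonneg z],
      sigmoid_le_one z⟩)]
  have e1 : ∫ p, sigmoid (p.1+p.2) * (p.1+p.2) ∂(gp v)
      = ∫ w, sigmoid w * w ∂(gaussianReal 0 (1 + v)) := by
    rw [← conv_gauss hv, integral_map hmadd.aemeasurable hcf1.aestronglyMeasurable]
    rfl
  have e2 : ∫ w, sigmoid w * w ∂(gaussianReal 0 (1 + v))
      = ∫ z, sigmoid (s*z) * (s*z) ∂(gaussianReal 0 1) := by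
    rw [← hmap2, integral_map (measurable_const_mul s).aemeasurable
      hcf1.aestronglyMeasurable]
  rw [e1, e2]
  have int3 : Integrable (fun z => sigmoid (s*z) * (s*z)) (gaussianReal 0 1) := by
    apply Integrable.mono' ((integrable_id_gauss one_ne_zero).abs.const_mul s)
      (hcf1.comp (continuous_const.mul continuous_id)).aestronglyMeasurable
    apply Filter.Eventually.of_forall
    intro z
    rw [Real.norm_eq_abs]
    calc |sigmoid (s*z) * (s*z)| ≤ |s*z| := habs_f1 _
      _ = s * |z| := by rw [abs_mul, abs_of_pos hspos]
  have int4 : Integrable (fun z => sigmoid z * z) (gaussianReal 0 1) := by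
    apply Integrable.mono' (integrable_id_gauss one_ne_zero).abs
      hcf1.aestronglyMeasurable
    exact Filter.Eventually.of_forall fun z => habs_f1 z
  rw [← integral_sub int3 int4]
  have hsplit : (fun z => sigmoid (s*z) * (s*z) - sigmoid z * z)
      = fun z => ((sigmoid (s*z) - 1/2) * (s*z) - (sigmoid z - 1/2) * z)
        + ((s-1)/2) * z := by
    funext z
    ring
  have intq1 := integrable_q_gen hspos
  have intq0 : Integrable (fun z => (sigmoid z - 1/2) * z) (gaussianReal 0 1) := by
    have := integrable_q_gen one_pos
    simpa using this
  have intA : Integrable (fun z => (sigmoid (s*z) - 1/2) * (s*z) - (sigmoid z - 1/2) * z)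
      (gaussianReal 0 1) := intq1.sub intq0
  rw [hsplit, integral_add intA
    ((integrable_id_gauss one_ne_zero).const_mul ((s-1)/2))]
  rw [integral_const_mul, integral_id_gauss, mul_zero, add_zero]
  rw [integral_pos_iff_support_of_nonneg_ae
    (Filter.Eventually.of_forall fun z => by
      have := q_scale hs1 z
      simp only [Pi.zero_apply]
      linarith) intA]
  have hsub : ({(0:ℝ)}ᶜ : Set ℝ) ⊆ Function.support
      fun z => (sigmoid (s*z) - 1/2) * (s*z) - (sigmoid z - 1/2) * z := by
    intro z hz
    have := q_scale_strict hs1 (Set.mem_compl_singleton_iff.mp hz)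
    simp only [Function.mem_support]
    intro hcon
    linarith [sub_eq_zero.mp hcon]
  calc (0:ℝ≥0∞) < 1 := by norm_num
    _ = (gaussianReal 0 1) {(0:ℝ)}ᶜ := N1_ne_zero.symm
    _ ≤ _ := measure_mono hsub

lemma strictConvexOn_G (hv : v ≠ 0) :
    StrictConvexOn ℝ Set.univ (fun c => ∫ p, pl p.1 (p.1 + p.2) c ∂(gp v)) := by
  refine ⟨convex_univ, ?_⟩
  intro a _ b _ hab ta tb hta htb htab
  simp only [smul_eq_mul]
  have hle : ∀ p : ℝ × ℝ, pl p.1 (p.1 + p.2) (ta*a + tb*b)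
      ≤ ta * pl p.1 (p.1 + p.2) a + tb * pl p.1 (p.1 + p.2) b := by
    intro p
    by_cases hw : p.1 + p.2 = 0
    · rw [hw, pl_zero_w, pl_zero_w, pl_zero_w]
      nlinarith [Real.log_nonneg (by norm_num : (1:ℝ) ≤ 2)]
    · have h := (pl_strictConvexOn p.1 hw).2 (Set.mem_univ a) (Set.mem_univ b)
        hab hta htb htab
      simpa using h.le
  have hstrict : ∀ p : ℝ × ℝ, p.1 + p.2 ≠ 0 → pl p.1 (p.1 + p.2) (ta*a + tb*b)
      < ta * pl p.1 (p.1 + p.2) a + tb * pl p.1 (p.1 + p.2) b := by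
    intro p hw
    have h := (pl_strictConvexOn p.1 hw).2 (Set.mem_univ a) (Set.mem_univ b)
      hab hta htb htab
    simpa using h
  have i1 := integrable_pl hv a
  have i2 := integrable_pl hv b
  have i3 := integrable_pl hv (ta*a + tb*b)
  have intD : Integrable (fun p : ℝ × ℝ => (ta * pl p.1 (p.1+p.2) a + tb * pl p.1 (p.1+p.2) b)
      - pl p.1 (p.1+p.2) (ta*a + tb*b)) (gp v) :=
    ((i1.const_mul ta).add (i2.const_mul tb)).sub i3
  have hpos : 0 < ∫ p, ((ta * pl p.1 (p.1+p.2) a + tb * pl p.1 (p.1+p.2) b)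
      - pl p.1 (p.1+p.2) (ta*a + tb*b)) ∂(gp v) := by
    rw [integral_pos_iff_support_of_nonneg_ae
      (Filter.Eventually.of_forall fun p => sub_nonneg.2 (hle p)) intD]
    have hms : MeasurableSet {p : ℝ × ℝ | p.1 + p.2 = 0} :=
      (measurable_fst.add measurable_snd) (measurableSet_singleton 0)
    have hzero : (gp v) {p : ℝ × ℝ | p.1 + p.2 = 0} = 0 := by
      have := ae_sum_ne_zero hv
      rw [ae_iff] at this
      convert this using 2
      ext p; simp
    have hsub : ({p : ℝ × ℝ | p.1 + p.2 = 0}ᶜ : Set (ℝ × ℝ)) ⊆ Function.support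
        fun p : ℝ × ℝ => (ta * pl p.1 (p.1+p.2) a + tb * pl p.1 (p.1+p.2) b)
          - pl p.1 (p.1+p.2) (ta*a + tb*b) := by
      intro p hp
      have := hstrict p hp
      simp only [Function.mem_support]
      intro hcon
      linarith [sub_eq_zero.mp hcon]
    calc (0:ℝ≥0∞) < 1 := by norm_num
      _ = (gp v) ({p : ℝ × ℝ | p.1 + p.2 = 0}ᶜ) := by
          rw [measure_compl hms (measure_ne_top _ _), hzero, measure_univ]
          simp
      _ ≤ _ := measure_mono hsub
  have iadd : Integrable (fun p : ℝ × ℝ => ta * pl p.1 (p.1+p.2) a + tb * pl p.1 (p.1+p.2) b)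
      (gp v) := (i1.const_mul ta).add (i2.const_mul tb)
  rw [integral_sub iadd i3, integral_add (i1.const_mul ta) (i2.const_mul tb),
    integral_const_mul, integral_const_mul] at hpos
  linarith

end Main

/-- For `Z` standard Gaussian and `ξ ~ N(0,v)`, `v > 0`, independent of `Z`, the function
`g(c) = E[−σ(Z)·c(Z+ξ) + log(1+e^{c(Z+ξ)})]` is strictly convex on `ℝ`, has `g'(0) < 0`
and `g'(1) > 0`, and hence has a unique minimizer `c*` with `0 < c* < 1`. -/
theorem scaleLoss_strictConvex_unique_min
    {Ω : Type*} [MeasurableSpace Ω] (P : Measure Ω) [IsProbabilityMeasure P]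
    (Z ξ : Ω → ℝ) (v : NNReal) (hv : 0 < v)
    (hZ : Measure.map Z P = gaussianReal 0 1)
    (hξ : Measure.map ξ P = gaussianReal 0 v)
    (hind : IndepFun Z ξ P) :
    StrictConvexOn ℝ Set.univ (scaleLoss P Z ξ)
    ∧ deriv (scaleLoss P Z ξ) 0 < 0
    ∧ 0 < deriv (scaleLoss P Z ξ) 1
    ∧ ∃ cs : ℝ, (∀ c, scaleLoss P Z ξ cs ≤ scaleLoss P Z ξ c)
        ∧ cs ∈ Set.Ioo (0 : ℝ) 1
        ∧ ∀ c', (∀ c, scaleLoss P Z ξ c' ≤ scaleLoss P Z ξ c) → c' = cs := by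
  have hv' : v ≠ 0 := hv.ne'
  have hZae : AEMeasurable Z P := by
    by_contra h
    rw [Measure.map_of_not_aemeasurable h] at hZ
    have h1 := congrArg (fun m : Measure ℝ => m Set.univ) hZ
    simp [measure_univ] at h1
  have hξae : AEMeasurable ξ P := by
    by_contra h
    rw [Measure.map_of_not_aemeasurable h] at hξ
    have h1 := congrArg (fun m : Measure ℝ => m Set.univ) hξ
    simp [measure_univ] at h1
  have hpair : AEMeasurable (fun ω => (Z ω, ξ ω)) P := hZae.prodMk hξae
  have hmapp : Measure.map (fun ω => (Z ω, ξ ω)) P = gp v := by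
    rw [(indepFun_iff_map_prod_eq_prod_map_map hZae hξae).mp hind, hZ, hξ]
    rfl
  have hgeq : scaleLoss P Z ξ = fun c => ∫ p, pl p.1 (p.1 + p.2) c ∂(gp v) := by
    funext c
    rw [← hmapp, integral_map hpair ((continuous_pl2 c).aestronglyMeasurable)]
    rfl
  rw [hgeq]
  set g := fun c => ∫ p, pl p.1 (p.1 + p.2) c ∂(gp v) with hgdef
  have hconv := strictConvexOn_G hv'
  have hD : ∀ c, HasDerivAt g (∫ p, pl' p.1 (p.1 + p.2) c ∂(gp v)) c := hasDerivAt_G hv'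
  have hd0 : deriv g 0 < 0 := by rw [(hD 0).deriv]; exact deriv0_neg hv'
  have hd1 : 0 < deriv g 1 := by rw [(hD 1).deriv]; exact deriv1_pos hv'
  refine ⟨hconv, hd0, hd1, ?_⟩
  have hcont : Continuous g :=
    continuous_iff_continuousAt.2 fun c => (hD c).differentiableAt.continuousAt
  obtain ⟨cs, hcsIcc, hcsmin⟩ := isCompact_Icc.exists_isMinOn
    (Set.nonempty_Icc.2 zero_le_one) hcont.continuousOn
  have hmin01 : ∀ x ∈ Set.Icc (0:ℝ) 1, g cs ≤ g x := fun x hx => hcsmin hx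
  have hne0 : cs ≠ 0 := by
    intro h0
    have h1 : Filter.Tendsto (slope g 0) (nhdsWithin 0 {(0:ℝ)}ᶜ)
        (nhds (∫ p, pl' p.1 (p.1 + p.2) 0 ∂(gp v))) :=
      hasDerivAt_iff_tendsto_slope.mp (hD 0)
    have h2 : Filter.Tendsto (slope g 0) (nhdsWithin 0 (Set.Ioi (0:ℝ)))
        (nhds (∫ p, pl' p.1 (p.1 + p.2) 0 ∂(gp v))) :=
      h1.mono_left (nhdsWithin_mono 0 (fun x hx => Set.mem_compl_singleton_iff.mpr
        (ne_of_gt hx)))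
    have h3 : ∀ᶠ t in nhdsWithin 0 (Set.Ioi (0:ℝ)), slope g 0 t < 0 :=
      h2.eventually_lt_const (deriv0_neg hv')
    have h4 : ∀ᶠ t in nhdsWithin 0 (Set.Ioi (0:ℝ)), t ∈ Set.Ioo (0:ℝ) 1 :=
      Ioo_mem_nhdsGT_of_mem ⟨le_refl 0, zero_lt_one⟩
    obtain ⟨t, hts, htIoo⟩ := (h3.and h4).exists
    rw [slope_def_field] at hts
    have ht0 : 0 < t := htIoo.1
    have hgt : g t < g 0 := by
      rcases div_neg_iff.mp (by simpa using hts) with ⟨hn, _⟩ | ⟨_, hd⟩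
      · linarith
      · linarith
    rw [← h0] at hgt
    exact absurd (hmin01 t ⟨htIoo.1.le, htIoo.2.le⟩) (not_le.2 hgt)
  have hne1 : cs ≠ 1 := by
    intro h1'
    have h1 : Filter.Tendsto (slope g 1) (nhdsWithin 1 {(1:ℝ)}ᶜ)
        (nhds (∫ p, pl' p.1 (p.1 + p.2) 1 ∂(gp v))) :=
      hasDerivAt_iff_tendsto_slope.mp (hD 1)
    have h2 : Filter.Tendsto (slope g 1) (nhdsWithin 1 (Set.Iio (1:ℝ)))
        (nhds (∫ p, pl' p.1 (p.1 + p.2) 1 ∂(gp v))) :=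
      h1.mono_left (nhdsWithin_mono 1 (fun x hx => Set.mem_compl_singleton_iff.mpr
        (ne_of_lt hx)))
    have h3 : ∀ᶠ t in nhdsWithin 1 (Set.Iio (1:ℝ)), 0 < slope g 1 t :=
      h2.eventually_const_lt (deriv1_pos hv')
    have h4 : ∀ᶠ t in nhdsWithin 1 (Set.Iio (1:ℝ)), t ∈ Set.Ioo (0:ℝ) 1 :=
      Ioo_mem_nhdsLT_of_mem ⟨zero_lt_one, le_refl 1⟩
    obtain ⟨t, hts, htIoo⟩ := (h3.and h4).exists
    rw [slope_def_field] at hts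
    have ht1 : t < 1 := htIoo.2
    have hgt : g t < g 1 := by
      rcases div_pos_iff.mp hts with ⟨_, hd⟩ | ⟨hn, _⟩
      · linarith
      · linarith
    rw [← h1'] at hgt
    exact absurd (hmin01 t ⟨htIoo.1.le, htIoo.2.le⟩) (not_le.2 hgt)
  have hcsIoo : cs ∈ Set.Ioo (0:ℝ) 1 :=
    ⟨lt_of_le_of_ne hcsIcc.1 (Ne.symm hne0), lt_of_le_of_ne hcsIcc.2 hne1⟩
  have hglobal : ∀ c, g cs ≤ g c := by
    intro c
    by_cases hc : c ∈ Set.Icc (0:ℝ) 1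
    · exact hmin01 c hc
    by_contra hlt
    push_neg at hlt
    rcases lt_or_ge c 0 with hc0 | hge
    · -- c < 0; 0 = t*c + (1-t)*cs with t = cs/(cs - c)
      set t : ℝ := cs / (cs - c) with ht_def
      have hden : 0 < cs - c := by linarith [hcsIoo.1]
      have ht0 : 0 < t := div_pos hcsIoo.1 hden
      have ht1 : t < 1 := by
        rw [ht_def, div_lt_one hden]
        linarith
      have hcomb : t * c + (1 - t) * cs = 0 := by
        calc t * c + (1 - t) * cs = cs - t * (cs - c) := by ring
          _ = cs - (cs/(cs-c)) * (cs - c) := by rw [ht_def]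
          _ = cs - cs := by rw [div_mul_cancel₀ _ hden.ne']
          _ = 0 := sub_self cs
      have hstep := hconv.2 (Set.mem_univ c) (Set.mem_univ cs)
        (by intro h; rw [h] at hc0; linarith [hcsIoo.1]) ht0
        (show (0:ℝ) < 1 - t by linarith) (show t + (1 - t) = 1 by ring)
      simp only [smul_eq_mul] at hstep
      rw [hcomb] at hstep
      have : g 0 < g cs := by nlinarith
      linarith [hmin01 0 ⟨le_refl 0, zero_le_one⟩]
    · have hc1 : 1 < c := by
        rcases lt_or_ge 1 c with h | h
        · exact h
        · exact absurd ⟨hge, h⟩ hc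
      -- 1 < c; 1 = t*c + (1-t)*cs with t = (1-cs)/(c - cs)
      set t : ℝ := (1 - cs) / (c - cs) with ht_def
      have hden : 0 < c - cs := by linarith [hcsIoo.2]
      have ht0 : 0 < t := div_pos (by linarith [hcsIoo.2]) hden
      have ht1 : t < 1 := by
        rw [ht_def, div_lt_one hden]
        linarith
      have hcomb : t * c + (1 - t) * cs = 1 := by
        calc t * c + (1 - t) * cs = cs + t * (c - cs) := by ring
          _ = cs + ((1-cs)/(c-cs)) * (c - cs) := by rw [ht_def]
          _ = cs + (1 - cs) := by rw [div_mul_cancel₀ _ hden.ne']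
          _ = 1 := by ring
      have hstep := hconv.2 (Set.mem_univ c) (Set.mem_univ cs)
        (by intro h; rw [h] at hc1; linarith [hcsIoo.2]) ht0
        (show (0:ℝ) < 1 - t by linarith) (show t + (1 - t) = 1 by ring)
      simp only [smul_eq_mul] at hstep
      rw [hcomb] at hstep
      have : g 1 < g cs := by nlinarith
      linarith [hmin01 1 ⟨zero_le_one, le_refl 1⟩]
  refine ⟨cs, hglobal, hcsIoo, ?_⟩
  intro c' hc'
  by_contra hne
  have heq : g c' = g cs := le_antisymm (hc' cs) (hglobal c')
  have hmid := hconv.2 (Set.mem_univ c') (Set.mem_univ cs) hne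
    (by norm_num : (0:ℝ) < 1/2) (by norm_num : (0:ℝ) < 1/2) (by norm_num)
  simp only [smul_eq_mul] at hmid
  have := hglobal (1/2 * c' + 1/2 * cs)
  linarith
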